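/- arXiv:2006.11421 — 4 statements merged into one kernel-verified Lean document; each statement's English description precedes it below -/
import Mathlib

section
/- (Discrete form of Lemma 1: ODEtoODEs solve gradient vanishing/explosion.) Let d, N be positive integers, let m ≤ N, let D_1, ..., D_m be diagonal d×d matrices whose diagonal entries all lie in {−1, +1}, let V_1, ..., V_m ∈ O(d), and let v ∈ ℝ^d. Then the backpropagation Jacobian product J = ∏_{r=1}^{m} (I_d + (1/N) D_r V_r) satisfies (1 − 1/N)^N ‖v‖₂ ≤ ‖J v‖₂ ≤ e ‖v‖₂. -/
open Matrix
open scoped BigOperators RealInnerProductSpace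

lemma euclid_mul (d : ℕ) (A B : Matrix (Fin d) (Fin d) ℝ) (v : EuclideanSpace ℝ (Fin d)) :
    Matrix.toEuclideanLin (A * B) v = Matrix.toEuclideanLin A (Matrix.toEuclideanLin B v) := by
  simp [Matrix.toEuclideanLin_apply, Matrix.mulVec_mulVec]

lemma euclid_isometry (d : ℕ) (M : Matrix (Fin d) (Fin d) ℝ) (h : Mᵀ * M = 1)
    (x : EuclideanSpace ℝ (Fin d)) : ‖Matrix.toEuclideanLin M x‖ = ‖x‖ := by
  have hinner : ⟪Matrix.toEuclideanLin M x, Matrix.toEuclideanLin M x⟫ = ⟪x, x⟫ := by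
    rw [← LinearMap.adjoint_inner_left, ← Matrix.toEuclideanLin_conjTranspose_eq_adjoint]
    have : Mᴴ = Mᵀ := by ext i j; simp [Matrix.conjTranspose_apply]
    rw [this, ← euclid_mul, h]
    simp [Matrix.toEuclideanLin_apply]
  have h1 := real_inner_self_eq_norm_sq (Matrix.toEuclideanLin M x)
  have h2 := real_inner_self_eq_norm_sq x
  nlinarith [norm_nonneg (Matrix.toEuclideanLin M x), norm_nonneg x]

lemma euclid_factor (d : ℕ) (c : ℝ) (hc0 : 0 ≤ c) (M : Matrix (Fin d) (Fin d) ℝ)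
    (h : Mᵀ * M = 1) (x : EuclideanSpace ℝ (Fin d)) :
    (1 - c) * ‖x‖ ≤ ‖Matrix.toEuclideanLin (1 + c • M) x‖ ∧
      ‖Matrix.toEuclideanLin (1 + c • M) x‖ ≤ (1 + c) * ‖x‖ := by
  have hx : Matrix.toEuclideanLin (1 + c • M) x = x + c • Matrix.toEuclideanLin M x := by
    simp [Matrix.toEuclideanLin_apply, Matrix.add_mulVec, Matrix.smul_mulVec]
  have hM := euclid_isometry d M h x
  constructor
  · have := norm_sub_norm_le x (-(c • Matrix.toEuclideanLin M x))
    rw [hx]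
    have h2 : ‖-(c • Matrix.toEuclideanLin M x)‖ = c * ‖x‖ := by
      rw [norm_neg, norm_smul, hM, Real.norm_eq_abs, abs_of_nonneg hc0]
    rw [sub_neg_eq_add] at this
    nlinarith
  · rw [hx]
    calc ‖x + c • Matrix.toEuclideanLin M x‖ ≤ ‖x‖ + ‖c • Matrix.toEuclideanLin M x‖ :=
          norm_add_le _ _
      _ = (1 + c) * ‖x‖ := by
          rw [norm_smul, hM, Real.norm_eq_abs, abs_of_nonneg hc0]; ring

lemma euclid_key (d : ℕ) (c : ℝ) (hc0 : 0 ≤ c) (hc1 : c ≤ 1)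
    (l : List (Matrix (Fin d) (Fin d) ℝ)) (h : ∀ M ∈ l, Mᵀ * M = 1)
    (v : EuclideanSpace ℝ (Fin d)) :
    (1 - c) ^ l.length * ‖v‖ ≤
        ‖Matrix.toEuclideanLin ((l.map (fun M => (1 : Matrix (Fin d) (Fin d) ℝ) + c • M)).prod) v‖ ∧
      ‖Matrix.toEuclideanLin ((l.map (fun M => (1 : Matrix (Fin d) (Fin d) ℝ) + c • M)).prod) v‖
        ≤ (1 + c) ^ l.length * ‖v‖ := by
  induction l with
  | nil => simp [Matrix.toEuclideanLin_apply]
  | cons M t ih =>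
    have ht := ih (fun A hA => h A (List.mem_cons_of_mem _ hA))
    have hM := h M List.mem_cons_self
    simp only [List.map_cons, List.prod_cons, List.length_cons]
    rw [euclid_mul]
    set w := Matrix.toEuclideanLin ((t.map (fun M => (1 : Matrix (Fin d) (Fin d) ℝ) + c • M)).prod) v with hw
    have hf := euclid_factor d c hc0 M hM w
    constructor
    · calc (1 - c) ^ (t.length + 1) * ‖v‖ = (1 - c) * ((1 - c) ^ t.length * ‖v‖) := by ring
        _ ≤ (1 - c) * ‖w‖ := by
            apply mul_le_mul_of_nonneg_left ht.1 (by linarith)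
        _ ≤ _ := hf.1
    · calc ‖Matrix.toEuclideanLin (1 + c • M) w‖ ≤ (1 + c) * ‖w‖ := hf.2
        _ ≤ (1 + c) * ((1 + c) ^ t.length * ‖v‖) := by
            apply mul_le_mul_of_nonneg_left ht.2 (by linarith)
        _ = (1 + c) ^ (t.length + 1) * ‖v‖ := by ring

/-- Discrete form of Lemma 1 (ODEtoODEs solve the gradient vanishing/explosion problem):
for diagonal matrices `D_r` with `±1` entries and `V_r ∈ O(d)`, the backpropagation
Jacobian product `J = ∏_{r=1}^m (I + (1/N) D_r V_r)` satisfies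
`(1 - 1/N)^N ‖v‖₂ ≤ ‖J v‖₂ ≤ e ‖v‖₂`. -/
theorem stmt3 (d N m : ℕ) (hd : 0 < d) (hN : 0 < N) (hm : m ≤ N)
    (D V : Fin m → Matrix (Fin d) (Fin d) ℝ)
    (hD : ∀ r, ∃ ds : Fin d → ℝ, (∀ i, ds i = 1 ∨ ds i = -1) ∧ D r = Matrix.diagonal ds)
    (hV : ∀ r, (V r)ᵀ * V r = 1)
    (v : EuclideanSpace ℝ (Fin d)) :
    (1 - (N : ℝ)⁻¹) ^ N * ‖v‖ ≤
        ‖Matrix.toEuclideanLin (((List.finRange m).map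
            (fun r => (1 : Matrix (Fin d) (Fin d) ℝ) + (N : ℝ)⁻¹ • (D r * V r))).prod) v‖
    ∧ ‖Matrix.toEuclideanLin (((List.finRange m).map
            (fun r => (1 : Matrix (Fin d) (Fin d) ℝ) + (N : ℝ)⁻¹ • (D r * V r))).prod) v‖
        ≤ Real.exp 1 * ‖v‖ := by
  set c : ℝ := (N : ℝ)⁻¹ with hc
  have hN1 : (1 : ℝ) ≤ (N : ℝ) := by exact_mod_cast hN
  have hc0 : 0 ≤ c := by positivity
  have hc1 : c ≤ 1 := inv_le_one_of_one_le₀ hN1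
  have horth : ∀ M ∈ (List.finRange m).map (fun r => D r * V r), Mᵀ * M = 1 := by
    intro M hM
    simp only [List.mem_map, List.mem_finRange, true_and] at hM
    obtain ⟨r, rfl⟩ := hM
    obtain ⟨ds, hds, hDr⟩ := hD r
    have hDD : (D r)ᵀ * D r = 1 := by
      rw [hDr, Matrix.diagonal_transpose, Matrix.diagonal_mul_diagonal]
      have : (fun i => ds i * ds i) = fun _ => (1:ℝ) :=
        funext fun i => by rcases hds i with h | h <;> simp [h]
      rw [this, Matrix.diagonal_one]
    calc (D r * V r)ᵀ * (D r * V r) = (V r)ᵀ * ((D r)ᵀ * D r) * V r := by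
          rw [Matrix.transpose_mul, Matrix.mul_assoc, Matrix.mul_assoc, Matrix.mul_assoc]
      _ = 1 := by rw [hDD, Matrix.mul_one, hV r]
  have key := euclid_key d c hc0 hc1 ((List.finRange m).map (fun r => D r * V r)) horth v
  rw [List.map_map, List.length_map, List.length_finRange] at key
  have heq : ((fun M => (1 : Matrix (Fin d) (Fin d) ℝ) + c • M) ∘ fun r => D r * V r)
      = fun r => (1 : Matrix (Fin d) (Fin d) ℝ) + c • (D r * V r) := rfl
  rw [heq] at key
  constructor
  · refine le_trans ?_ key.1
    apply mul_le_mul_of_nonneg_right _ (norm_nonneg v)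
    exact pow_le_pow_of_le_one (by linarith) (by linarith) hm
  · refine le_trans key.2 ?_
    apply mul_le_mul_of_nonneg_right _ (norm_nonneg v)
    calc (1 + c) ^ m ≤ Real.exp c ^ m := by
          apply pow_le_pow_left₀ (by linarith)
          linarith [Real.add_one_le_exp c]
      _ = Real.exp (m * c) := (Real.exp_nat_mul c m).symm
      _ ≤ Real.exp 1 := by
          apply Real.exp_le_exp.2
          rw [hc]
          rw [mul_inv_le_iff₀ (by positivity)]
          simpa using (show (m:ℝ) ≤ N from by exact_mod_cast hm)
end

section
/- Let A, B ∈ ℝ^{d×d} be skew-symmetric matrices (Aᵀ = −A, Bᵀ = −B). Then the matrix exponentials satisfy ‖exp(A) − exp(B)‖₂ ≤ ‖A − B‖₂. -/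
set_option maxHeartbeats 1000000

open Matrix

/-- The spectral (operator 2-) norm of a real matrix. -/
noncomputable def specNorm {p q : ℕ} (A : Matrix (Fin p) (Fin q) ℝ) : ℝ :=
  ‖LinearMap.toContinuousLinearMap (Matrix.toEuclideanLin A)‖

section aux

open NormedSpace intervalIntegral

variable {𝔄 : Type*} [NormedRing 𝔄] [StarRing 𝔄] [CStarRing 𝔄] [NormedAlgebra ℝ 𝔄]
  [CompleteSpace 𝔄] [ContinuousStar 𝔄] [StarModule ℝ 𝔄]

lemma norm_exp_le_one_of_skew {x : 𝔄} (hx : star x = -x) : ‖exp x‖ ≤ 1 := by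
  have h1 : star (exp x) * exp x = 1 := by
    let +nondep : NormedAlgebra ℚ 𝔄 := .restrictScalars ℚ ℝ 𝔄
    rw [star_exp, hx, ← NormedSpace.exp_add_of_commute (Commute.refl x).neg_left, neg_add_cancel, exp_zero]
  have h2 : ‖exp x‖ * ‖exp x‖ = ‖(1 : 𝔄)‖ := by
    rw [← h1, CStarRing.norm_star_mul_self]
  have h3 : ‖(1:𝔄)‖ * ‖(1:𝔄)‖ = ‖(1:𝔄)‖ := by
    conv_lhs => rw [← CStarRing.norm_star_mul_self (x := (1:𝔄))]
    simp
  have he : ‖(1:𝔄)‖ ≤ 1 := by nlinarith [norm_nonneg (1:𝔄)]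
  nlinarith [norm_nonneg (exp x), norm_nonneg (1:𝔄)]

lemma exp_lipschitz_of_skew {a b : 𝔄} (ha : star a = -a) (hb : star b = -b) :
    ‖exp a - exp b‖ ≤ ‖a - b‖ := by
  set f : ℝ → 𝔄 := fun s => exp (s • a) * exp ((1 - s) • b) with hf
  set g : ℝ → 𝔄 := fun s => exp (s • a) * (a - b) * exp ((1 - s) • b) with hg
  have hderiv : ∀ s ∈ Set.uIcc (0:ℝ) 1, HasDerivAt f (g s) s := by
    intro s _
    have h1 : HasDerivAt (fun u : ℝ => exp (u • a)) (exp (s • a) * a) s :=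
      hasDerivAt_exp_smul_const a s
    have h2 : HasDerivAt (fun u : ℝ => exp ((1 - u) • b))
        ((-1 : ℝ) • (b * exp ((1 - s) • b))) s := by
      have hu : HasDerivAt (fun u : ℝ => (1 : ℝ) - u) (-1) s := by
        simpa using (hasDerivAt_id s).const_sub 1
      exact HasDerivAt.scomp s (hasDerivAt_exp_smul_const' b (1 - s)) hu
    have h3 := h1.mul h2
    have hEq : exp (s • a) * a * exp ((1 - s) • b) +
        exp (s • a) * ((-1 : ℝ) • (b * exp ((1 - s) • b))) = g s := by
      simp only [hg, neg_one_smul, mul_neg]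
      noncomm_ring
    exact hEq ▸ h3
  have hcont : Continuous g := by
    let +nondep : NormedAlgebra ℚ 𝔄 := .restrictScalars ℚ ℝ 𝔄
    have h1 : Continuous fun s : ℝ => exp (s • a) :=
      exp_continuous.comp (continuous_id.smul continuous_const)
    have h2 : Continuous fun s : ℝ => exp ((1 - s) • b) :=
      exp_continuous.comp (((continuous_const.sub continuous_id).smul continuous_const))
    exact (h1.mul continuous_const).mul h2
  have hint : exp a - exp b = ∫ s in (0:ℝ)..1, g s := by
    have := intervalIntegral.integral_eq_sub_of_hasDerivAt hderiv
      (hcont.intervalIntegrable 0 1)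
    rw [this, hf]
    simp [exp_zero]
  rw [hint]
  have hbound : ∀ s ∈ Set.uIoc (0:ℝ) 1, ‖g s‖ ≤ ‖a - b‖ := by
    intro s _
    have hsa : star (s • a) = -(s • a) := by
      rw [star_smul, ha, star_trivial, smul_neg]
    have hsb : star ((1 - s) • b) = -((1 - s) • b) := by
      rw [star_smul, hb, star_trivial, smul_neg]
    calc ‖exp (s • a) * (a - b) * exp ((1 - s) • b)‖
        ≤ ‖exp (s • a) * (a - b)‖ * ‖exp ((1 - s) • b)‖ := norm_mul_le _ _
      _ ≤ ‖exp (s • a)‖ * ‖a - b‖ * ‖exp ((1 - s) • b)‖ := by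
          gcongr; exact norm_mul_le _ _
      _ ≤ 1 * ‖a - b‖ * 1 := by
          gcongr
          · exact norm_exp_le_one_of_skew hsa
          · exact norm_exp_le_one_of_skew hsb
      _ = ‖a - b‖ := by ring
  calc ‖∫ s in (0:ℝ)..1, g s‖ ≤ ‖a - b‖ * |1 - 0| :=
        intervalIntegral.norm_integral_le_of_norm_le_const hbound
    _ = ‖a - b‖ := by norm_num

end aux

open scoped Matrix.Norms.L2Operator in
lemma auxexp (d : ℕ) (M : Matrix (Fin d) (Fin d) ℝ)
    (hc : Continuous (Matrix.toEuclideanCLM (𝕜 := ℝ) (n := Fin d))) :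
    Matrix.toEuclideanCLM (𝕜 := ℝ) (n := Fin d) (NormedSpace.exp M) =
      NormedSpace.exp (Matrix.toEuclideanCLM (𝕜 := ℝ) (n := Fin d) M) :=
  by
  let +nondep : NormedAlgebra ℚ (Matrix (Fin d) (Fin d) ℝ) := .restrictScalars ℚ ℝ _
  exact NormedSpace.map_exp (Matrix.toEuclideanCLM (𝕜 := ℝ) (n := Fin d)) hc M

/-- The matrix exponential is 1-Lipschitz (in spectral norm) on skew-symmetric matrices:
`‖exp(A) - exp(B)‖₂ ≤ ‖A - B‖₂`. -/
theorem stmt5 (d : ℕ) (A B : Matrix (Fin d) (Fin d) ℝ)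
    (hA : Aᵀ = -A) (hB : Bᵀ = -B) :
    specNorm (NormedSpace.exp A - NormedSpace.exp B) ≤ specNorm (A - B) := by
  set φ := Matrix.toEuclideanCLM (𝕜 := ℝ) (n := Fin d)
  have hφnorm : ∀ M : Matrix (Fin d) (Fin d) ℝ, specNorm M = ‖φ M‖ := by
    intro M
    have h : (φ M : EuclideanSpace ℝ (Fin d) →ₗ[ℝ] EuclideanSpace ℝ (Fin d)) =
        (LinearMap.toContinuousLinearMap (toEuclideanLin M) :
          EuclideanSpace ℝ (Fin d) →ₗ[ℝ] EuclideanSpace ℝ (Fin d)) := by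
      rw [Matrix.coe_toEuclideanCLM_eq_toEuclideanLin, LinearMap.coe_toContinuousLinearMap]
    rw [specNorm, ContinuousLinearMap.coe_inj.mp h]
  have hφcont : Continuous φ := by
    have : (φ : Matrix (Fin d) (Fin d) ℝ → _) =
        ({ toFun := φ, map_add' := map_add φ, map_smul' := map_smul φ } :
          Matrix (Fin d) (Fin d) ℝ →ₗ[ℝ] _) := rfl
    rw [this]
    exact LinearMap.continuous_of_finiteDimensional _
  have hmapexp : ∀ M : Matrix (Fin d) (Fin d) ℝ,
      φ (NormedSpace.exp M) = NormedSpace.exp (φ M) :=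
    fun M => auxexp d M hφcont
  have hstarA : star (φ A) = -(φ A) := by
    have h : star A = -A := by
      rw [star_eq_conjTranspose, conjTranspose_eq_transpose_of_trivial, hA]
    rw [← map_star, h, map_neg]
  have hstarB : star (φ B) = -(φ B) := by
    have h : star B = -B := by
      rw [star_eq_conjTranspose, conjTranspose_eq_transpose_of_trivial, hB]
    rw [← map_star, h, map_neg]
  rw [hφnorm, hφnorm, map_sub, map_sub, hmapexp, hmapexp]
  exact exp_lipschitz_of_skew hstarA hstarB
end

section
/- Let N be a positive integer and D > 0, and let δ ≥ 0. Let N′, N″, Q′, Q″ ∈ ℝ^{n×n} be symmetric with spectral norms at most D and with ‖N′ − N″‖₂ + ‖Q′ − Q″‖₂ ≤ 2δ, and let W₀′, W₀″ ∈ O(n) with ‖W₀′ − W₀″‖₂ ≤ δ. Define the orthogonal flows W_i′ = W_{i−1}′ exp((1/N)(W_{i−1}′ᵀ Q′ W_{i−1}′ N′ − N′ W_{i−1}′ᵀ Q′ W_{i−1}′)) and W_i″ = W_{i−1}″ exp((1/N)(W_{i−1}″ᵀ Q″ W_{i−1}″ N″ − N″ W_{i−1}″ᵀ Q″ W_{i−1}″))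 for i = 1, ..., N. Then for every i ∈ {0, 1, ..., N}: ‖W_i′ − W_i″‖₂ ≤ ((1 + 1/D) e^{4D²} − 1/D) δ. -/
open Matrix

/-- The skew-symmetric generator of the ISO-ODEtoODE flow:
`A(W, Q, N) = Wᵀ Q W N - N Wᵀ Q W`. -/
def isoGen {n : ℕ} (W Q N : Matrix (Fin n) (Fin n) ℝ) : Matrix (Fin n) (Fin n) ℝ :=
  Wᵀ * Q * W * N - N * (Wᵀ * Q * W)

namespace Stmt7Aux

open scoped Matrix.Norms.L2Operator

lemma one_add_mul_exp_half_le (u : ℝ) (hu : 0 ≤ u) :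
    1 + u * Real.exp (u / 2) ≤ Real.exp u := by
  have ht : 1 + u/2 + (u/2)^2/2 ≤ Real.exp (u/2) := by
    have h := Real.sum_le_exp_of_nonneg (by positivity : (0:ℝ) ≤ u/2) 3
    simp [Finset.sum_range_succ, Nat.factorial] at h
    convert h using 1 <;> ring_nf
  have hsq : Real.exp u = Real.exp (u/2) * Real.exp (u/2) := by
    rw [← Real.exp_add]; ring_nf
  nlinarith [Real.exp_pos (u/2), sq_nonneg (u/2), sq_nonneg ((u/2)^2),
    sq_nonneg (Real.exp (u/2) - u/2 - 1 - (u/2)^2/2)]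

variable {p : ℕ}

lemma spec_eq (A : Matrix (Fin p) (Fin p) ℝ) : specNorm A = ‖A‖ := rfl

lemma norm_one_le' : ‖(1 : Matrix (Fin p) (Fin p) ℝ)‖ ≤ 1 := by
  rw [Matrix.cstar_norm_def, _root_.map_one]
  exact ContinuousLinearMap.norm_id_le

lemma norm_transpose (A : Matrix (Fin p) (Fin p) ℝ) : ‖Aᵀ‖ = ‖A‖ := by
  have h : Aᴴ = Aᵀ := by ext i j; simp [Matrix.conjTranspose_apply]
  rw [← h]; exact Matrix.l2_opNorm_conjTranspose A

lemma ortho_norm_le_one {W : Matrix (Fin p) (Fin p) ℝ} (h : Wᵀ * W = 1) : ‖W‖ ≤ 1 := by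
  have h2 : ‖Wᴴ * W‖ = ‖W‖ * ‖W‖ := Matrix.l2_opNorm_conjTranspose_mul_self W
  have hc : Wᴴ = Wᵀ := by ext i j; simp [Matrix.conjTranspose_apply]
  rw [hc, h] at h2
  nlinarith [norm_nonneg W, norm_one_le' (p := p)]

lemma exp_orth {X : Matrix (Fin p) (Fin p) ℝ} (h : Xᵀ = -X) :
    (NormedSpace.exp X)ᵀ * NormedSpace.exp X = 1 := by
  rw [← Matrix.exp_transpose, h,
    ← Matrix.exp_add_of_commute _ _ ((Commute.refl X).neg_left), neg_add_cancel,
    NormedSpace.exp_zero]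

lemma exp_lipschitz (X Y : Matrix (Fin p) (Fin p) ℝ) :
    ‖NormedSpace.exp X - NormedSpace.exp Y‖ ≤ ‖X - Y‖ * Real.exp (max ‖X‖ ‖Y‖) := by
  set M := max ‖X‖ ‖Y‖ with hM
  set d := ‖X - Y‖ with hd
  have hM0 : 0 ≤ M := le_trans (norm_nonneg X) (le_max_left _ _)
  have hd0 : 0 ≤ d := norm_nonneg _
  have hpow : ∀ (Z : Matrix (Fin p) (Fin p) ℝ), ‖Z‖ ≤ M → ∀ k, ‖Z ^ k‖ ≤ M ^ k := by
    intro Z hZ k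
    induction k with
    | zero => simpa using norm_one_le'
    | succ k ih =>
      calc ‖Z ^ (k+1)‖ = ‖Z ^ k * Z‖ := by rw [pow_succ]
        _ ≤ ‖Z ^ k‖ * ‖Z‖ := norm_mul_le _ _
        _ ≤ M ^ k * M := mul_le_mul ih hZ (norm_nonneg _) (pow_nonneg hM0 _)
        _ = M ^ (k+1) := (pow_succ M k).symm
  have key : ∀ k : ℕ, ‖X ^ (k+1) - Y ^ (k+1)‖ ≤ (k+1 : ℝ) * M ^ k * d := by
    intro k
    induction k with
    | zero => simp [hd]
    | succ k ih =>
      have hdecomp : X ^ (k+2) - Y ^ (k+2) =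
          (X - Y) * X ^ (k+1) + Y * (X ^ (k+1) - Y ^ (k+1)) := by
        rw [pow_succ', pow_succ' Y]; noncomm_ring
      calc ‖X ^ (k+2) - Y ^ (k+2)‖
          ≤ ‖(X - Y) * X ^ (k+1)‖ + ‖Y * (X ^ (k+1) - Y ^ (k+1))‖ := by
            rw [hdecomp]; exact norm_add_le _ _
        _ ≤ d * M ^ (k+1) + M * ((k+1 : ℝ) * M ^ k * d) := by
            gcongr
            · exact norm_mul_le _ _ |>.trans (by gcongr; exact hpow X (le_max_left _ _) _)
            · exact norm_mul_le _ _ |>.trans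
                (mul_le_mul (le_max_right _ _) ih (norm_nonneg _) hM0)
        _ ≤ ((k:ℝ)+1+1) * M ^ (k+1) * d := by rw [pow_succ]; nlinarith [pow_nonneg hM0 k]
        _ = ((k+1 : ℕ)+1 : ℝ) * M ^ (k+1) * d := by push_cast; ring
  have hsX := NormedSpace.expSeries_summable' (𝕂 := ℝ) X
  have hsY := NormedSpace.expSeries_summable' (𝕂 := ℝ) Y
  have hnX := NormedSpace.norm_expSeries_summable' (𝕂 := ℝ) X
  have hnY := NormedSpace.norm_expSeries_summable' (𝕂 := ℝ) Y
  set f : ℕ → Matrix (Fin p) (Fin p) ℝ :=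
    fun k => (Nat.factorial k : ℝ)⁻¹ • X ^ k - (Nat.factorial k : ℝ)⁻¹ • Y ^ k with hf
  have hfs : Summable f := hsX.sub hsY
  have hnf : Summable fun k => ‖f k‖ := by
    apply Summable.of_nonneg_of_le (fun _ => norm_nonneg _) (fun k => norm_sub_le _ _)
      (hnX.add hnY)
  have hdiff : NormedSpace.exp X - NormedSpace.exp Y = ∑' k, f k := by
    simp only [NormedSpace.exp_eq_tsum ℝ]
    exact (Summable.tsum_sub hsX hsY).symm
  have hterm : ∀ m : ℕ, ‖f (m+1)‖ ≤ M ^ m / Nat.factorial m * d := by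
    intro m
    have h1 : ‖f (m+1)‖ = (Nat.factorial (m+1) : ℝ)⁻¹ * ‖X ^ (m+1) - Y ^ (m+1)‖ := by
      simp only [hf, ← smul_sub, norm_smul]
      simp [Real.norm_eq_abs, abs_of_nonneg]
    rw [h1]
    have h2 : (Nat.factorial (m+1) : ℝ)⁻¹ * ‖X ^ (m+1) - Y ^ (m+1)‖ ≤
        (Nat.factorial (m+1) : ℝ)⁻¹ * ((m+1 : ℝ) * M ^ m * d) :=
      mul_le_mul_of_nonneg_left (key m) (by positivity)
    refine h2.trans (le_of_eq ?_)
    rw [Nat.factorial_succ]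
    have hfac : (Nat.factorial m : ℝ) ≠ 0 := Nat.cast_ne_zero.mpr m.factorial_pos.ne'
    push_cast
    field_simp
  have hg : Summable fun m : ℕ => M ^ m / Nat.factorial m * d :=
    (Real.summable_pow_div_factorial M).mul_right d
  have hcomp : Summable fun m : ℕ => ‖f (m+1)‖ :=
    hnf.comp_injective Nat.succ_injective
  calc ‖NormedSpace.exp X - NormedSpace.exp Y‖ = ‖∑' k, f k‖ := by rw [hdiff]
    _ ≤ ∑' k, ‖f k‖ := norm_tsum_le_tsum_norm hnf
    _ = ‖f 0‖ + ∑' m, ‖f (m+1)‖ := hnf.tsum_eq_zero_add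
    _ = ∑' m, ‖f (m+1)‖ := by simp [hf]
    _ ≤ ∑' m, M ^ m / Nat.factorial m * d := Summable.tsum_le_tsum hterm hcomp hg
    _ = (∑' m, M ^ m / Nat.factorial m) * d := tsum_mul_right
    _ = Real.exp M * d := by
        rw [Real.exp_eq_exp_ℝ, NormedSpace.exp_eq_tsum_div]
    _ = d * Real.exp M := mul_comm _ _

lemma sandwich_norm (W Q V : Matrix (Fin p) (Fin p) ℝ) :
    ‖Wᵀ * Q * V‖ ≤ ‖W‖ * ‖Q‖ * ‖V‖ := by
  calc ‖Wᵀ * Q * V‖ ≤ ‖Wᵀ * Q‖ * ‖V‖ := norm_mul_le _ _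
    _ ≤ ‖Wᵀ‖ * ‖Q‖ * ‖V‖ := by gcongr; exact norm_mul_le _ _
    _ = ‖W‖ * ‖Q‖ * ‖V‖ := by rw [norm_transpose]

lemma isoGen_skew {W Q Nm : Matrix (Fin p) (Fin p) ℝ} (hQ : Qᵀ = Q) (hNm : Nmᵀ = Nm) :
    (isoGen W Q Nm)ᵀ = -(isoGen W Q Nm) := by
  unfold isoGen
  simp only [Matrix.transpose_sub, Matrix.transpose_mul, Matrix.transpose_transpose, hQ, hNm]
  noncomm_ring

lemma isoGen_norm_le {W Q Nm : Matrix (Fin p) (Fin p) ℝ} {D : ℝ} (hD : 0 ≤ D)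
    (hW : ‖W‖ ≤ 1) (hQ : ‖Q‖ ≤ D) (hNm : ‖Nm‖ ≤ D) : ‖isoGen W Q Nm‖ ≤ 2 * D ^ 2 := by
  have hB : ‖Wᵀ * Q * W‖ ≤ D := by
    calc ‖Wᵀ * Q * W‖ ≤ ‖W‖ * ‖Q‖ * ‖W‖ := sandwich_norm W Q W
      _ ≤ 1 * D * 1 := by gcongr <;> first | exact hW | exact hQ | exact (norm_nonneg _).trans hQ
      _ = D := by ring
  calc ‖isoGen W Q Nm‖ ≤ ‖Wᵀ * Q * W * Nm‖ + ‖Nm * (Wᵀ * Q * W)‖ := norm_sub_le _ _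
    _ ≤ ‖Wᵀ * Q * W‖ * ‖Nm‖ + ‖Nm‖ * ‖Wᵀ * Q * W‖ := by
        gcongr <;> exact norm_mul_le _ _
    _ ≤ D * D + D * D := by gcongr <;> first | exact hB | exact hNm | exact norm_nonneg _ |
          exact (norm_nonneg _).trans hB
    _ = 2 * D ^ 2 := by ring

lemma isoGen_diff_le {W1 W2 Q1 Q2 N1 N2 : Matrix (Fin p) (Fin p) ℝ} {D : ℝ} (hD : 0 ≤ D)
    (hW1 : ‖W1‖ ≤ 1) (hW2 : ‖W2‖ ≤ 1) (hQ1 : ‖Q1‖ ≤ D) (hQ2 : ‖Q2‖ ≤ D)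
    (hN1 : ‖N1‖ ≤ D) (hN2 : ‖N2‖ ≤ D) :
    ‖isoGen W1 Q1 N1 - isoGen W2 Q2 N2‖ ≤
      4 * D ^ 2 * ‖W1 - W2‖ + 2 * D * (‖Q1 - Q2‖ + ‖N1 - N2‖) := by
  set B1 := W1ᵀ * Q1 * W1 with hB1
  set B2 := W2ᵀ * Q2 * W2 with hB2
  have hB2n : ‖B2‖ ≤ D := by
    calc ‖B2‖ ≤ ‖W2‖ * ‖Q2‖ * ‖W2‖ := sandwich_norm _ _ _
      _ ≤ 1 * D * 1 := by gcongr <;> first | exact hW2 | exact hQ2 |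
            exact (norm_nonneg _).trans hQ2
      _ = D := by ring
  have hBd : ‖B1 - B2‖ ≤ 2 * D * ‖W1 - W2‖ + ‖Q1 - Q2‖ := by
    have hdecomp : B1 - B2 = (W1 - W2)ᵀ * Q1 * W1 + W2ᵀ * Q1 * (W1 - W2)
        + W2ᵀ * (Q1 - Q2) * W2 := by
      rw [hB1, hB2]; simp only [Matrix.transpose_sub]; noncomm_ring
    calc ‖B1 - B2‖ ≤ ‖(W1 - W2)ᵀ * Q1 * W1‖ + ‖W2ᵀ * Q1 * (W1 - W2)‖
          + ‖W2ᵀ * (Q1 - Q2) * W2‖ := by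
          rw [hdecomp]; exact (norm_add_le _ _).trans (by gcongr; exact norm_add_le _ _)
      _ ≤ ‖W1 - W2‖ * ‖Q1‖ * ‖W1‖ + ‖W2‖ * ‖Q1‖ * ‖W1 - W2‖ + ‖W2‖ * ‖Q1 - Q2‖ * ‖W2‖ := by
          gcongr <;> exact sandwich_norm _ _ _
      _ ≤ ‖W1 - W2‖ * D * 1 + 1 * D * ‖W1 - W2‖ + 1 * ‖Q1 - Q2‖ * 1 := by
          gcongr <;> first | exact hW1 | exact hW2 | exact hQ1 | exact norm_nonneg _ |
            exact (norm_nonneg _).trans hQ1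
      _ = 2 * D * ‖W1 - W2‖ + ‖Q1 - Q2‖ := by ring
  have hdec2 : isoGen W1 Q1 N1 - isoGen W2 Q2 N2 =
      ((B1 - B2) * N1 + B2 * (N1 - N2)) - (N1 * (B1 - B2) + (N1 - N2) * B2) := by
    unfold isoGen; rw [hB1, hB2]; noncomm_ring
  calc ‖isoGen W1 Q1 N1 - isoGen W2 Q2 N2‖
      ≤ ‖(B1 - B2) * N1‖ + ‖B2 * (N1 - N2)‖ + (‖N1 * (B1 - B2)‖ + ‖(N1 - N2) * B2‖) := by
        rw [hdec2]
        exact (norm_sub_le _ _).trans (by gcongr <;> exact norm_add_le _ _)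
    _ ≤ ‖B1 - B2‖ * ‖N1‖ + ‖B2‖ * ‖N1 - N2‖ + (‖N1‖ * ‖B1 - B2‖ + ‖N1 - N2‖ * ‖B2‖) := by
        gcongr <;> exact norm_mul_le _ _
    _ ≤ (2 * D * ‖W1 - W2‖ + ‖Q1 - Q2‖) * D + D * ‖N1 - N2‖
        + (D * (2 * D * ‖W1 - W2‖ + ‖Q1 - Q2‖) + ‖N1 - N2‖ * D) := by
        gcongr <;> first | exact hBd | exact hB2n | exact hN1 | exact norm_nonneg _ |
          exact (norm_nonneg _).trans hN1 | exact (norm_nonneg _).trans hB2n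
    _ = 4 * D ^ 2 * ‖W1 - W2‖ + 2 * D * (‖Q1 - Q2‖ + ‖N1 - N2‖) := by ring

end Stmt7Aux

open scoped Matrix.Norms.L2Operator
open Stmt7Aux

/-- Stability of the ISO-ODEtoODE orthogonal parameter flow:
`‖W_i' - W_i''‖₂ ≤ ((1 + 1/D) e^{4D²} - 1/D) δ` for all `0 ≤ i ≤ N`. -/
theorem stmt7 (n N : ℕ) (hN : 0 < N) (D δ : ℝ) (hD : 0 < D) (hδ : 0 ≤ δ)
    (Nm' Nm'' Q' Q'' : Matrix (Fin n) (Fin n) ℝ)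
    (hNs' : Nm'ᵀ = Nm') (hNs'' : Nm''ᵀ = Nm'') (hQs' : Q'ᵀ = Q') (hQs'' : Q''ᵀ = Q'')
    (hN' : specNorm Nm' ≤ D) (hN'' : specNorm Nm'' ≤ D)
    (hQ' : specNorm Q' ≤ D) (hQ'' : specNorm Q'' ≤ D)
    (hNQdiff : specNorm (Nm' - Nm'') + specNorm (Q' - Q'') ≤ 2 * δ)
    (W' W'' : ℕ → Matrix (Fin n) (Fin n) ℝ)
    (hW0' : (W' 0)ᵀ * W' 0 = 1) (hW0'' : (W'' 0)ᵀ * W'' 0 = 1)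
    (hW0diff : specNorm (W' 0 - W'' 0) ≤ δ)
    (hrec' : ∀ i : ℕ, i < N →
      W' (i + 1) = W' i * NormedSpace.exp ((N : ℝ)⁻¹ • isoGen (W' i) Q' Nm'))
    (hrec'' : ∀ i : ℕ, i < N →
      W'' (i + 1) = W'' i * NormedSpace.exp ((N : ℝ)⁻¹ • isoGen (W'' i) Q'' Nm'')) :
    ∀ i : ℕ, i ≤ N →
      specNorm (W' i - W'' i) ≤ ((1 + 1 / D) * Real.exp (4 * D ^ 2) - 1 / D) * δ := by
  simp only [spec_eq] at hN' hN'' hQ' hQ'' hNQdiff hW0diff ⊢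
  have hNr : (0:ℝ) < N := by exact_mod_cast hN
  have hN0 : (N:ℝ) ≠ 0 := hNr.ne'
  have hD0 : D ≠ 0 := hD.ne'
  set E := Real.exp (2 * D ^ 2 / N) with hE
  set r := (1 : ℝ) + 4 * D ^ 2 / N * E with hr
  have hE1 : 1 ≤ E := Real.one_le_exp (by positivity)
  have hE0 : 0 ≤ E := by linarith
  have hr1 : 1 ≤ r := by
    have h0 : 0 ≤ 4 * D ^ 2 / N * E := by positivity
    rw [hr]; linarith
  have hr0 : (0:ℝ) < r := lt_of_lt_of_le one_pos hr1
  have key : ∀ i, i ≤ N → ((W' i)ᵀ * W' i = 1 ∧ (W'' i)ᵀ * W'' i = 1) ∧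
      ‖W' i - W'' i‖ ≤ (δ + δ / D) * r ^ i - δ / D := by
    intro i
    induction i with
    | zero =>
      intro _
      refine ⟨⟨hW0', hW0''⟩, ?_⟩
      rw [pow_zero]
      have : (δ + δ / D) * (1:ℝ) - δ / D = δ := by ring
      linarith [hW0diff]
    | succ i ih =>
      intro hiN
      have hi : i < N := hiN
      obtain ⟨⟨ho1, ho2⟩, hd⟩ := ih (le_of_lt hi)
      set X := (N : ℝ)⁻¹ • isoGen (W' i) Q' Nm' with hX
      set Y := (N : ℝ)⁻¹ • isoGen (W'' i) Q'' Nm'' with hY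
      have hXs : Xᵀ = -X := by
        rw [hX, Matrix.transpose_smul, isoGen_skew hQs' hNs', smul_neg]
      have hYs : Yᵀ = -Y := by
        rw [hY, Matrix.transpose_smul, isoGen_skew hQs'' hNs'', smul_neg]
      have horth' : (W' (i+1))ᵀ * W' (i+1) = 1 := by
        rw [hrec' i hi, Matrix.transpose_mul]
        calc (NormedSpace.exp X)ᵀ * (W' i)ᵀ * (W' i * NormedSpace.exp X)
            = (NormedSpace.exp X)ᵀ * ((W' i)ᵀ * W' i) * NormedSpace.exp X := by
              noncomm_ring
          _ = 1 := by rw [ho1, mul_one, exp_orth hXs]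
      have horth'' : (W'' (i+1))ᵀ * W'' (i+1) = 1 := by
        rw [hrec'' i hi, Matrix.transpose_mul]
        calc (NormedSpace.exp Y)ᵀ * (W'' i)ᵀ * (W'' i * NormedSpace.exp Y)
            = (NormedSpace.exp Y)ᵀ * ((W'' i)ᵀ * W'' i) * NormedSpace.exp Y := by
              noncomm_ring
          _ = 1 := by rw [ho2, mul_one, exp_orth hYs]
      refine ⟨⟨horth', horth''⟩, ?_⟩
      have hW'le : ‖W' i‖ ≤ 1 := ortho_norm_le_one ho1
      have hW''le : ‖W'' i‖ ≤ 1 := ortho_norm_le_one ho2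
      have hXn : ‖X‖ ≤ 2 * D ^ 2 / N := by
        rw [hX, norm_smul, Real.norm_eq_abs, abs_of_nonneg (by positivity)]
        calc (N:ℝ)⁻¹ * ‖isoGen (W' i) Q' Nm'‖ ≤ (N:ℝ)⁻¹ * (2 * D ^ 2) := by
              gcongr
              exact isoGen_norm_le hD.le hW'le hQ' hN'
          _ = 2 * D ^ 2 / N := by ring
      have hYn : ‖Y‖ ≤ 2 * D ^ 2 / N := by
        rw [hY, norm_smul, Real.norm_eq_abs, abs_of_nonneg (by positivity)]
        calc (N:ℝ)⁻¹ * ‖isoGen (W'' i) Q'' Nm''‖ ≤ (N:ℝ)⁻¹ * (2 * D ^ 2) := by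
              gcongr
              exact isoGen_norm_le hD.le hW''le hQ'' hN''
          _ = 2 * D ^ 2 / N := by ring
      have hXYn : ‖X - Y‖ ≤ (4 * D ^ 2 * ‖W' i - W'' i‖ + 4 * D * δ) / N := by
        rw [hX, hY, ← smul_sub, norm_smul, Real.norm_eq_abs, abs_of_nonneg (by positivity)]
        have h1 := isoGen_diff_le (D := D) hD.le hW'le hW''le hQ' hQ'' hN' hN''
        have h2 : ‖Q' - Q''‖ + ‖Nm' - Nm''‖ ≤ 2 * δ := by linarith
        calc (N:ℝ)⁻¹ * ‖isoGen (W' i) Q' Nm' - isoGen (W'' i) Q'' Nm''‖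
            ≤ (N:ℝ)⁻¹ * (4 * D ^ 2 * ‖W' i - W'' i‖ + 4 * D * δ) := by
              gcongr
              calc ‖isoGen (W' i) Q' Nm' - isoGen (W'' i) Q'' Nm''‖
                  ≤ 4 * D ^ 2 * ‖W' i - W'' i‖ + 2 * D * (‖Q' - Q''‖ + ‖Nm' - Nm''‖) := h1
                _ ≤ 4 * D ^ 2 * ‖W' i - W'' i‖ + 4 * D * δ := by nlinarith
          _ = (4 * D ^ 2 * ‖W' i - W'' i‖ + 4 * D * δ) / N := by ring
      have hexp : ‖NormedSpace.exp X - NormedSpace.exp Y‖ ≤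
          (4 * D ^ 2 * ‖W' i - W'' i‖ + 4 * D * δ) / N * E := by
        refine (exp_lipschitz X Y).trans ?_
        have hmax : max ‖X‖ ‖Y‖ ≤ 2 * D ^ 2 / N := max_le hXn hYn
        have hmax' : Real.exp (max ‖X‖ ‖Y‖) ≤ E := by
          rw [hE]; exact Real.exp_le_exp.mpr hmax
        exact mul_le_mul hXYn hmax' (Real.exp_pos _).le (by positivity)
      have hexpY1 : ‖NormedSpace.exp Y‖ ≤ 1 := ortho_norm_le_one (exp_orth hYs)
      have hsplit : W' (i+1) - W'' (i+1) =
          W' i * (NormedSpace.exp X - NormedSpace.exp Y)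
            + (W' i - W'' i) * NormedSpace.exp Y := by
        rw [hrec' i hi, hrec'' i hi]; noncomm_ring
      have hdi1 : ‖W' (i+1) - W'' (i+1)‖ ≤
          ‖W' i - W'' i‖ + (4 * D ^ 2 * ‖W' i - W'' i‖ + 4 * D * δ) / N * E := by
        rw [hsplit]
        calc ‖W' i * (NormedSpace.exp X - NormedSpace.exp Y)
              + (W' i - W'' i) * NormedSpace.exp Y‖
            ≤ ‖W' i‖ * ‖NormedSpace.exp X - NormedSpace.exp Y‖
              + ‖W' i - W'' i‖ * ‖NormedSpace.exp Y‖ :=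
              (norm_add_le _ _).trans (by gcongr <;> exact norm_mul_le _ _)
          _ ≤ 1 * ((4 * D ^ 2 * ‖W' i - W'' i‖ + 4 * D * δ) / N * E)
              + ‖W' i - W'' i‖ * 1 := by
              gcongr <;> first
                | exact (norm_nonneg _).trans hW'le
                | exact hW'le
                | exact hexp
                | exact hexpY1
          _ = ‖W' i - W'' i‖ + (4 * D ^ 2 * ‖W' i - W'' i‖ + 4 * D * δ) / N * E := by ring
      calc ‖W' (i+1) - W'' (i+1)‖
          ≤ ‖W' i - W'' i‖ + (4 * D ^ 2 * ‖W' i - W'' i‖ + 4 * D * δ) / N * E := hdi1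
        _ = ‖W' i - W'' i‖ * r + (r - 1) * (δ / D) := by rw [hr]; field_simp; ring
        _ ≤ ((δ + δ / D) * r ^ i - δ / D) * r + (r - 1) * (δ / D) :=
            add_le_add_left (mul_le_mul_of_nonneg_right hd hr0.le) _
        _ = (δ + δ / D) * r ^ (i+1) - δ / D := by rw [pow_succ]; ring
  intro i hi
  obtain ⟨-, hdi⟩ := key i hi
  have h2 : r ≤ Real.exp (4 * D ^ 2 / N) := by
    have h := one_add_mul_exp_half_le (4 * D ^ 2 / N) (by positivity)
    rw [hr, hE]
    have heq : 4 * D ^ 2 / (N:ℝ) / 2 = 2 * D ^ 2 / N := by ring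
    rw [heq] at h
    exact h
  have h1 : r ^ i ≤ r ^ N := pow_le_pow_right₀ hr1 hi
  have h3 : r ^ N ≤ Real.exp (4 * D ^ 2) := by
    calc r ^ N ≤ Real.exp (4 * D ^ 2 / N) ^ N := pow_le_pow_left₀ hr0.le h2 N
      _ = Real.exp (N * (4 * D ^ 2 / N)) := by rw [← Real.exp_nat_mul]
      _ = Real.exp (4 * D ^ 2) := by congr 1; field_simp
  have hcoef : 0 ≤ δ + δ / D := by positivity
  calc ‖W' i - W'' i‖ ≤ (δ + δ / D) * r ^ i - δ / D := hdi
    _ ≤ (δ + δ / D) * Real.exp (4 * D ^ 2) - δ / D :=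
        sub_le_sub_right (mul_le_mul_of_nonneg_left (h1.trans h3) hcoef) _
    _ = ((1 + 1 / D) * Real.exp (4 * D ^ 2) - 1 / D) * δ := by field_simp
end

section
/- Let N be a positive integer and D_b > 0. Let f: ℝ → ℝ be 1-Lipschitz with f(0) = 0, applied coordinatewise to vectors. Let Ω₁ ∈ ℝ^{n×d} and Ω₂ ∈ ℝ^{m×n} have spectral norm at most 1 (e.g. Stiefel matrices), let W_1, ..., W_N ∈ O(n), and let b ∈ ℝ^n with ‖b‖₂ ≤ D_b. For s ∈ ℝ^d define the policy g(s) = Ω₂ x_N where x₀ = Ω₁ s and x_i = x_{i−1} + (1/N) f(W_i x_{i−1} + b) for i = 1, ..., N. Then ‖g(s)‖₂ ≤ e ‖s‖₂ + (e − 1) D_b. -/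
open Matrix

/-- Coordinatewise application of a scalar function to a Euclidean vector. -/
def emap {n : ℕ} (f : ℝ → ℝ) (y : EuclideanSpace ℝ (Fin n)) : EuclideanSpace ℝ (Fin n) :=
  WithLp.toLp 2 (fun j => f (y j))


lemma opbound {p q : ℕ} (A : Matrix (Fin p) (Fin q) ℝ) (v : EuclideanSpace ℝ (Fin q)) :
    ‖Matrix.toEuclideanLin A v‖ ≤ specNorm A * ‖v‖ := by
  simpa [specNorm] using (LinearMap.toContinuousLinearMap (Matrix.toEuclideanLin A)).le_opNorm v

lemma emap_bound {n : ℕ} (f : ℝ → ℝ) (hf : LipschitzWith 1 f) (hf0 : f 0 = 0)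
    (y : EuclideanSpace ℝ (Fin n)) : ‖emap f y‖ ≤ ‖y‖ := by
  rw [EuclideanSpace.norm_eq, EuclideanSpace.norm_eq]
  apply Real.sqrt_le_sqrt
  apply Finset.sum_le_sum
  intro j _
  have := hf.dist_le_mul (y j) 0
  rw [hf0, Real.dist_eq, Real.dist_eq, sub_zero, sub_zero] at this
  have h' : |f (y j)| ≤ |y j| := by simpa using this
  have h2 : |f (y j)| ^ 2 ≤ |y j| ^ 2 := pow_le_pow_left₀ (abs_nonneg _) h' 2
  simpa [emap, Real.norm_eq_abs, sq_abs] using h2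

lemma orth_norm {n : ℕ} (A : Matrix (Fin n) (Fin n) ℝ) (hA : Aᵀ * A = 1)
    (x : EuclideanSpace ℝ (Fin n)) : ‖Matrix.toEuclideanLin A x‖ = ‖x‖ := by
  have h : (inner ℝ (Matrix.toEuclideanLin A x) (Matrix.toEuclideanLin A x) : ℝ) = inner ℝ x x := by
    rw [← LinearMap.adjoint_inner_right, ← Matrix.toEuclideanLin_conjTranspose_eq_adjoint]
    have : (Aᴴ).toEuclideanLin (Matrix.toEuclideanLin A x) = x := by
      simp [Matrix.toEuclideanLin_apply, Matrix.mulVec_mulVec]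
      rw [hA]
      simp
    rw [this]
  have := congrArg Real.sqrt h
  rwa [real_inner_self_eq_norm_sq, real_inner_self_eq_norm_sq, Real.sqrt_sq (norm_nonneg _),
    Real.sqrt_sq (norm_nonneg _)] at this

/-- Output bound (eq. (sbound) of Lemma 2): the discretized ODEtoODE policy
`g(s) = Ω₂ x_N`, `x₀ = Ω₁ s`, `x_i = x_{i-1} + (1/N) f(W_i x_{i-1} + b)` satisfies
`‖g(s)‖₂ ≤ e ‖s‖₂ + (e - 1) D_b`. -/
theorem stmt9 (n d m N : ℕ) (hN : 0 < N) (Db : ℝ) (hDb : 0 < Db)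
    (f : ℝ → ℝ) (hf : LipschitzWith 1 f) (hf0 : f 0 = 0)
    (Ω₁ : Matrix (Fin n) (Fin d) ℝ) (Ω₂ : Matrix (Fin m) (Fin n) ℝ)
    (hΩ₁ : specNorm Ω₁ ≤ 1) (hΩ₂ : specNorm Ω₂ ≤ 1)
    (W : ℕ → Matrix (Fin n) (Fin n) ℝ)
    (hW : ∀ i : ℕ, 1 ≤ i → i ≤ N → (W i)ᵀ * W i = 1)
    (b : EuclideanSpace ℝ (Fin n)) (hb : ‖b‖ ≤ Db)
    (s : EuclideanSpace ℝ (Fin d))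
    (x : ℕ → EuclideanSpace ℝ (Fin n))
    (hx0 : x 0 = Matrix.toEuclideanLin Ω₁ s)
    (hrec : ∀ i : ℕ, i < N →
      x (i + 1) = x i + (N : ℝ)⁻¹ • emap f (Matrix.toEuclideanLin (W (i + 1)) (x i) + b)) :
    ‖Matrix.toEuclideanLin Ω₂ (x N)‖ ≤ Real.exp 1 * ‖s‖ + (Real.exp 1 - 1) * Db := by
  have hNr : (0:ℝ) < N := Nat.cast_pos.mpr hN
  set c : ℝ := 1 + (N:ℝ)⁻¹ with hc
  have hc0 : 0 ≤ c := by positivity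
  have key : ∀ i, i ≤ N → ‖x i‖ + Db ≤ c ^ i * (‖s‖ + Db) := by
    intro i
    induction i with
    | zero =>
      intro _
      have h0 : ‖x 0‖ ≤ ‖s‖ := by
        rw [hx0]
        calc ‖Matrix.toEuclideanLin Ω₁ s‖ ≤ specNorm Ω₁ * ‖s‖ := opbound _ _
          _ ≤ 1 * ‖s‖ := mul_le_mul_of_nonneg_right hΩ₁ (norm_nonneg _)
          _ = ‖s‖ := one_mul _
      simpa using by linarith
    | succ i ih =>
      intro hiN
      have hxi := ih (Nat.le_of_succ_le hiN)
      have h1 : ‖emap f (Matrix.toEuclideanLin (W (i+1)) (x i) + b)‖ ≤ ‖x i‖ + Db := by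
        calc ‖emap f (Matrix.toEuclideanLin (W (i+1)) (x i) + b)‖
            ≤ ‖Matrix.toEuclideanLin (W (i+1)) (x i) + b‖ := emap_bound f hf hf0 _
          _ ≤ ‖Matrix.toEuclideanLin (W (i+1)) (x i)‖ + ‖b‖ := norm_add_le _ _
          _ = ‖x i‖ + ‖b‖ := by
              rw [orth_norm _ (hW (i+1) (by omega) (by omega))]
          _ ≤ ‖x i‖ + Db := by linarith
      have h2 : ‖x (i+1)‖ ≤ ‖x i‖ + (N:ℝ)⁻¹ * (‖x i‖ + Db) := by
        rw [hrec i (Nat.lt_of_succ_le hiN)]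
        calc ‖x i + (N : ℝ)⁻¹ • emap f (Matrix.toEuclideanLin (W (i + 1)) (x i) + b)‖
            ≤ ‖x i‖ + ‖(N : ℝ)⁻¹ • emap f (Matrix.toEuclideanLin (W (i + 1)) (x i) + b)‖ :=
              norm_add_le _ _
          _ = ‖x i‖ + (N:ℝ)⁻¹ * ‖emap f (Matrix.toEuclideanLin (W (i + 1)) (x i) + b)‖ := by
              rw [norm_smul]
              simp [abs_of_nonneg (le_of_lt (inv_pos.mpr hNr))]
          _ ≤ ‖x i‖ + (N:ℝ)⁻¹ * (‖x i‖ + Db) := by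
              have := mul_le_mul_of_nonneg_left h1 (le_of_lt (inv_pos.mpr hNr))
              linarith
      have h3 : ‖x (i+1)‖ + Db ≤ c * (‖x i‖ + Db) := by
        rw [hc]; nlinarith [h2]
      calc ‖x (i+1)‖ + Db ≤ c * (‖x i‖ + Db) := h3
        _ ≤ c * (c ^ i * (‖s‖ + Db)) := mul_le_mul_of_nonneg_left hxi hc0
        _ = c ^ (i+1) * (‖s‖ + Db) := by ring
  have hcN : c ^ N ≤ Real.exp 1 := by
    have h1 : c ≤ Real.exp ((N:ℝ)⁻¹) := by
      have := Real.add_one_le_exp ((N:ℝ)⁻¹)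
      linarith
    calc c ^ N ≤ (Real.exp ((N:ℝ)⁻¹)) ^ N := pow_le_pow_left₀ hc0 h1 N
      _ = Real.exp ((N:ℝ) * (N:ℝ)⁻¹) := by rw [← Real.exp_nat_mul]
      _ = Real.exp 1 := by rw [mul_inv_cancel₀ (ne_of_gt hNr)]
  have hS : 0 ≤ ‖s‖ + Db := by positivity
  calc ‖Matrix.toEuclideanLin Ω₂ (x N)‖ ≤ specNorm Ω₂ * ‖x N‖ := opbound _ _
    _ ≤ 1 * ‖x N‖ := mul_le_mul_of_nonneg_right hΩ₂ (norm_nonneg _)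
    _ = ‖x N‖ := one_mul _
    _ ≤ c ^ N * (‖s‖ + Db) - Db := by linarith [key N le_rfl]
    _ ≤ Real.exp 1 * (‖s‖ + Db) - Db := by
        have := mul_le_mul_of_nonneg_right hcN hS
        linarith
    _ = Real.exp 1 * ‖s‖ + (Real.exp 1 - 1) * Db := by ring
end
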